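/- Let $n$ be a normalizer of $D(E)$ in $A_R(G_E)$ over an integral domain $R$, with $\operatorname{dom}(n) = \operatorname{supp}(n^*n)$ and $\operatorname{ran}(n) = \operatorname{supp}(nn^*)$. If $x \in \operatorname{dom}(n)$, then $\alpha_n(x) \in \operatorname{ran}(n)$, where $\alpha_n(x) = r(\operatorname{supp}(n)x)$. -/
import Mathlib


open scoped Classical BigOperators

namespace LPA

structure DirGraph where
  V : Type
  E : Type
  r : E → V
  s : E → V

structure InfPath (G : DirGraph) where
  edges : ℕ → G.E
  compat : ∀ i, G.s (edges i) = G.r (edges (i + 1))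

structure FinPath (G : DirGraph) where
  len : ℕ
  vtx : G.V
  edges : ℕ → G.E
  compat : ∀ i, i + 1 < len → G.s (edges i) = G.r (edges (i + 1))
  vtx_eq : 0 < len → vtx = G.r (edges 0)

variable {G : DirGraph}

/-- The source vertex of a finite path (its `vtx` if it has length `0`). -/
def FinPath.src (μ : FinPath G) : G.V :=
  if μ.len = 0 then μ.vtx else G.s (μ.edges (μ.len - 1))

/-- The range vertex of an infinite path. -/
def InfPath.rng (x : InfPath G) : G.V := G.r (x.edges 0)

/-- `x ∼ₖ y`: shift equivalence with lag `k`. -/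
def ShiftEquiv (x : InfPath G) (k : ℤ) (y : InfPath G) : Prop :=
  ∃ a b N : ℕ, (a : ℤ) - (b : ℤ) = k ∧ ∀ i, N ≤ i → x.edges (i + a) = y.edges (i + b)

def RowFinite (G : DirGraph) : Prop := ∀ v : G.V, {e : G.E | G.r e = v}.Finite

def NoSources (G : DirGraph) : Prop := ∀ v : G.V, ∃ e : G.E, G.r e = v

/-- `x = μ z`: the infinite path `x` is the concatenation of the finite path `μ`
with the infinite path `z`. -/
def IsConcat (μ : FinPath G) (z x : InfPath G) : Prop :=
  z.rng = μ.src ∧ ∀ i, x.edges i = if i < μ.len then μ.edges i else z.edges (i - μ.len)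

/-- `ρ = μ β`: concatenation of finite paths. -/
def IsAppendF (μ β ρ : FinPath G) : Prop :=
  ρ.len = μ.len + β.len ∧ (∀ i < μ.len, ρ.edges i = μ.edges i) ∧
    (∀ i < β.len, ρ.edges (μ.len + i) = β.edges i) ∧
    ρ.vtx = if μ.len = 0 then β.vtx else μ.vtx

/-- Triples `(x, k, y)`: the ambient type of the graph groupoid. -/
abbrev GTrip (G : DirGraph) := InfPath G × ℤ × InfPath G

def gmul (g h : GTrip G) : GTrip G := (g.1, g.2.1 + h.2.1, h.2.2)
def ginv (g : GTrip G) : GTrip G := (g.2.2, -g.2.1, g.1)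
def unit (x : InfPath G) : GTrip G := (x, 0, x)

def GraphGroupoid (G : DirGraph) : Set (GTrip G) :=
  {g | ShiftEquiv g.1 g.2.1 g.2.2}

/-- `BC` for subsets of the groupoid. -/
def setMul (B C : Set (GTrip G)) : Set (GTrip G) :=
  {g | ∃ γ ∈ B, ∃ η ∈ C, γ.2.2 = η.1 ∧ g = gmul γ η}

def setInv (B : Set (GTrip G)) : Set (GTrip G) := ginv '' B

/-- The cylinder set `Z(μ)` of infinite paths extending `μ`. -/
def Zset (μ : FinPath G) : Set (InfPath G) :=
  {x | (∀ i < μ.len, x.edges i = μ.edges i) ∧ x.rng = μ.vtx}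

/-- The basic compact open bisection `Z(μ,ν) = {(μz, |μ|-|ν|, νz)}`. -/
def ZZ (μ ν : FinPath G) : Set (GTrip G) :=
  {g | ∃ z : InfPath G, IsConcat μ z g.1 ∧ IsConcat ν z g.2.2 ∧
    g.2.1 = (μ.len : ℤ) - (ν.len : ℤ)}

instance : TopologicalSpace (InfPath G) :=
  TopologicalSpace.generateFrom {S | ∃ μ : FinPath G, S = Zset μ}

def unitSet (S : Set (InfPath G)) : Set (GTrip G) := {g | ∃ x ∈ S, g = unit x}

variable (R : Type) [CommRing R]

/-- The diagonal `D(E)` of the Steinberg algebra. -/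
noncomputable def Diag (G : DirGraph) : Submodule R (GTrip G → R) :=
  Submodule.span R {f | ∃ μ : FinPath G, f = Set.indicator (unitSet (Zset μ)) 1}

/-- The Steinberg algebra `A_R(G_E)` as a set of functions on the groupoid. -/
noncomputable def Steinberg (G : DirGraph) : Submodule R (GTrip G → R) :=
  Submodule.span R
    {f | ∃ μ ν : FinPath G, μ.src = ν.src ∧ f = Set.indicator (ZZ μ ν) 1}

variable {R}

/-- Convolution product. -/
noncomputable def conv (f g : GTrip G → R) : GTrip G → R :=
  fun γ => ∑ᶠ η ∈ {η : GTrip G | η.1 = γ.1}, f η * g (gmul (ginv η) γ)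

/-- Involution `f^*(γ) = star (f (γ⁻¹))`. -/
def starf [StarRing R] (f : GTrip G → R) : GTrip G → R :=
  fun γ => star (f (ginv γ))

/-- `n` is a normalizer of the diagonal. -/
def IsNormalizer [StarRing R] (n : GTrip G → R) : Prop :=
  n ∈ Steinberg R G ∧ ∀ d ∈ Diag R G,
    conv (conv n d) (starf n) ∈ Diag R G ∧ conv (conv (starf n) d) n ∈ Diag R G

/-- `α_n(x) = r(supp(n) x)` (given by a choice; unique for normalizers). -/
noncomputable def alphaFun (n : GTrip G → R) (x : InfPath G) : InfPath G :=
  if h : ∃ g : GTrip G, n g ≠ 0 ∧ g.2.2 = x then h.choose.1 else x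

/-- `dom(n) = supp(n^* n)`, as a subset of the infinite path space. -/
noncomputable def domSet [StarRing R] (n : GTrip G → R) : Set (InfPath G) :=
  {x | conv (starf n) n (unit x) ≠ 0}

/-- `ran(n) = supp(n n^*)`, as a subset of the infinite path space. -/
noncomputable def ranSet [StarRing R] (n : GTrip G → R) : Set (InfPath G) :=
  {x | conv n (starf n) (unit x) ≠ 0}

/-- `d ∘ α_n`, viewed as a function on the groupoid vanishing off `s(supp n)`. -/
noncomputable def dAlpha (d n : GTrip G → R) : GTrip G → R := fun g =>
  if (g.2.1 = 0 ∧ g.1 = g.2.2 ∧ ∃ h : GTrip G, n h ≠ 0 ∧ h.2.2 = g.2.2)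
  then d (unit (alphaFun n g.2.2)) else 0

/-- `p_x`, the characteristic function of the unit `{x}`. -/
noncomputable def ppt (R : Type) [CommRing R] (x : InfPath G) : GTrip G → R :=
  Set.indicator {unit x} 1

/-- `f` is homogeneous of degree `k`. -/
def Homog (k : ℤ) (f : GTrip G → R) : Prop := ∀ g : GTrip G, f g ≠ 0 → g.2.1 = k

def IsCycle (η : FinPath G) : Prop :=
  0 < η.len ∧ η.src = η.vtx ∧
    ∀ i j, 0 < i → i + 1 < η.len → 0 < j → j + 1 < η.len → i ≠ j →
      G.s (η.edges i) ≠ G.r (η.edges j)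

def HasEntrance (η : FinPath G) : Prop :=
  ∃ (e : G.E) (i : ℕ), i < η.len ∧ G.r e = G.r (η.edges i) ∧ e ≠ η.edges i

/-- `z = η η η ⋯`. -/
def IsPeriodicOf (η : FinPath G) (z : InfPath G) : Prop :=
  ∀ i, z.edges i = η.edges (i % η.len)

/-! ### Auxiliary lemmas for `alpha_mem_ran` -/

section Aux

open Function Set

/-- finsum over a set equals a finset sum when the finset traps the support. -/
theorem finsum_mem_eq_sum'' {α M : Type*} [AddCommMonoid M] (f : α → M) {s : Set α}
    (t : Finset α) (hts : ∀ a ∈ t, a ∈ s) (hst : ∀ a ∈ s, f a ≠ 0 → a ∈ t) :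
    ∑ᶠ a ∈ s, f a = ∑ a ∈ t, f a := by
  refine finsum_mem_eq_sum_of_inter_support_eq f ?_
  ext a
  simp only [Set.mem_inter_iff, Finset.coe_sort_coe, Finset.mem_coe, Function.mem_support]
  exact ⟨fun ⟨h1, h2⟩ => ⟨hst a h1 h2, h2⟩, fun ⟨h1, h2⟩ => ⟨hts a h1, h2⟩⟩

theorem finsum_mem_single' {α M : Type*} [AddCommMonoid M] (f : α → M) {s : Set α} (a : α)
    (ha : a ∈ s) (h : ∀ b ∈ s, f b ≠ 0 → b = a) : ∑ᶠ b ∈ s, f b = f a := by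
  rw [finsum_mem_eq_sum'' f {a} (by simpa using ha) (fun b hb hfb => by simp [h b hb hfb])]
  simp

theorem finsum_mem_zero'' {α M : Type*} [AddCommMonoid M] (f : α → M) {s : Set α}
    (h : ∀ b ∈ s, f b = 0) : ∑ᶠ b ∈ s, f b = 0 := by
  rw [finsum_mem_eq_sum'' f ∅ (by simp) (fun b hb hfb => absurd (h b hb) hfb)]
  simp

theorem InfPath.ext' {x y : InfPath G} (h : ∀ i, x.edges i = y.edges i) : x = y := by
  cases x; cases y
  simp only [InfPath.mk.injEq]
  exact funext h

theorem ginv_ginv (b : GTrip G) : ginv (ginv b) = b := by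
  simp [ginv]

theorem gmul_ginv_self (γ : GTrip G) : gmul (ginv γ) γ = unit γ.2.2 := by
  simp [gmul, ginv, unit]

/-- Collapse of convolution against a function vanishing off units, on the right. -/
theorem conv_diag_right {A m : GTrip G → R}
    (hA : ∀ g : GTrip G, A g ≠ 0 → g.2.1 = 0 ∧ g.2.2 = g.1) (γ : GTrip G) :
    conv m A γ = m γ * A (unit γ.2.2) := by
  have h1 : (∑ᶠ η ∈ {η : GTrip G | η.1 = γ.1}, m η * A (gmul (ginv η) γ)) =
      m γ * A (gmul (ginv γ) γ) := by
    refine finsum_mem_single' (fun η => m η * A (gmul (ginv η) γ)) γ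
      (show γ ∈ {η : GTrip G | η.1 = γ.1} from rfl) ?_
    rintro b hb hbne
    have hAne : A (gmul (ginv b) γ) ≠ 0 := right_ne_zero_of_mul hbne
    obtain ⟨hmid, h22⟩ := hA _ hAne
    have hmid' : -b.2.1 + γ.2.1 = 0 := hmid
    have h22' : γ.2.2 = b.2.2 := h22
    have hb' : b.1 = γ.1 := hb
    exact Prod.ext hb' (Prod.ext (by omega) h22'.symm)
  show (∑ᶠ η ∈ {η : GTrip G | η.1 = γ.1}, m η * A (gmul (ginv η) γ)) = _
  rw [h1, gmul_ginv_self]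

/-- Collapse of convolution against a function vanishing off units, on the left. -/
theorem conv_diag_left {B m : GTrip G → R}
    (hB : ∀ g : GTrip G, B g ≠ 0 → g.2.1 = 0 ∧ g.2.2 = g.1) (γ : GTrip G) :
    conv B m γ = B (unit γ.1) * m γ := by
  have h1 : (∑ᶠ η ∈ {η : GTrip G | η.1 = γ.1}, B η * m (gmul (ginv η) γ)) =
      B (unit γ.1) * m (gmul (ginv (unit γ.1)) γ) := by
    refine finsum_mem_single' (fun η => B η * m (gmul (ginv η) γ)) (unit γ.1)
      (show (unit γ.1) ∈ {η : GTrip G | η.1 = γ.1} from rfl) ?_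
    rintro b hb hbne
    have hBne : B b ≠ 0 := left_ne_zero_of_mul hbne
    obtain ⟨hmid, h22⟩ := hB _ hBne
    have hb' : b.1 = γ.1 := hb
    exact Prod.ext hb' (Prod.ext hmid (h22.trans hb'))
  have h2 : gmul (ginv (unit γ.1)) γ = γ := by simp [gmul, ginv, unit]
  show (∑ᶠ η ∈ {η : GTrip G | η.1 = γ.1}, B η * m (gmul (ginv η) γ)) = _
  rw [h1, h2]

/-- Elements of the diagonal vanish off the unit space. -/
theorem diag_vanish {f : GTrip G → R} (hf : f ∈ Diag R G) :
    ∀ g : GTrip G, f g ≠ 0 → g.2.1 = 0 ∧ g.2.2 = g.1 := by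
  have hf' : f ∈ Submodule.span R
      {f : GTrip G → R | ∃ μ : FinPath G, f = Set.indicator (unitSet (Zset μ)) 1} := hf
  clear hf
  induction hf' using Submodule.span_induction with
  | mem f hfm =>
    obtain ⟨μ, rfl⟩ := hfm
    intro g hg
    by_cases hm : g ∈ unitSet (Zset μ)
    · obtain ⟨z, _, rfl⟩ := hm
      exact ⟨rfl, rfl⟩
    · rw [Set.indicator_of_notMem hm] at hg
      exact absurd rfl hg
  | zero => intro g hg; exact absurd rfl hg
  | add f1 f2 h1 h2 ih1 ih2 =>
    intro g hg
    by_cases hg1 : f1 g = 0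
    · refine ih2 g (fun h0 => hg ?_)
      show f1 g + f2 g = 0
      rw [hg1, h0, add_zero]
    · exact ih1 g hg1
  | smul c f hfm ih =>
    intro g hg
    refine ih g (fun h0 => hg ?_)
    show c • f g = 0
    rw [h0, smul_zero]

/-- Convolving with the indicator of a unit set containing all sources acts as identity. -/
theorem conv_indicator_unit {m : GTrip G → R} {U : Set (InfPath G)}
    (hm : ∀ g : GTrip G, m g ≠ 0 → g.2.2 ∈ U) :
    conv m (Set.indicator (unitSet U) (1 : GTrip G → R)) = m := by
  have hvan : ∀ g : GTrip G,
      Set.indicator (unitSet U) (1 : GTrip G → R) g ≠ 0 → g.2.1 = 0 ∧ g.2.2 = g.1 := by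
    intro g hg
    by_cases hgm : g ∈ unitSet U
    · obtain ⟨z, _, rfl⟩ := hgm; exact ⟨rfl, rfl⟩
    · rw [Set.indicator_of_notMem hgm] at hg; exact absurd rfl hg
  funext γ
  rw [conv_diag_right hvan]
  by_cases h0 : m γ = 0
  · rw [h0, zero_mul]
  · have hmem : unit γ.2.2 ∈ unitSet U := ⟨γ.2.2, hm γ h0, rfl⟩
    rw [Set.indicator_of_mem hmem, Pi.one_apply, mul_one]

/-- Elements of a basic bisection are determined by their range path. -/
theorem ZZ_det_left {μ ν : FinPath G} {g g' : GTrip G} (hg : g ∈ ZZ μ ν) (hg' : g' ∈ ZZ μ ν)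
    (h1 : g.1 = g'.1) : g = g' := by
  obtain ⟨z, hzμ, hzν, hk⟩ := hg
  obtain ⟨z', hzμ', hzν', hk'⟩ := hg'
  have hz : z = z' := by
    apply InfPath.ext'
    intro j
    have e1 := hzμ.2 (j + μ.len)
    have e2 := hzμ'.2 (j + μ.len)
    rw [if_neg (by omega), Nat.add_sub_cancel] at e1 e2
    rw [← e1, h1, e2]
  have h22 : g.2.2 = g'.2.2 := by
    apply InfPath.ext'
    intro i
    rw [hzν.2 i, hzν'.2 i, hz]
  exact Prod.ext h1 (Prod.ext (by rw [hk, hk']) h22)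

/-- Elements of a basic bisection are determined by their source path. -/
theorem ZZ_det_right {μ ν : FinPath G} {g g' : GTrip G} (hg : g ∈ ZZ μ ν) (hg' : g' ∈ ZZ μ ν)
    (h2 : g.2.2 = g'.2.2) : g = g' := by
  obtain ⟨z, hzμ, hzν, hk⟩ := hg
  obtain ⟨z', hzμ', hzν', hk'⟩ := hg'
  have hz : z = z' := by
    apply InfPath.ext'
    intro j
    have e1 := hzν.2 (j + ν.len)
    have e2 := hzν'.2 (j + ν.len)
    rw [if_neg (by omega), Nat.add_sub_cancel] at e1 e2
    rw [← e1, h2, e2]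
  have h11 : g.1 = g'.1 := by
    apply InfPath.ext'
    intro i
    rw [hzμ.2 i, hzμ'.2 i, hz]
  exact Prod.ext h11 (Prod.ext (by rw [hk, hk']) h2)

/-- Elements of the Steinberg algebra have finite source- and range-fibers. -/
theorem steinberg_fibers {f : GTrip G → R} (hf : f ∈ Steinberg R G)
    (w : InfPath G) :
    {η : GTrip G | f η ≠ 0 ∧ η.1 = w}.Finite ∧ {η : GTrip G | f η ≠ 0 ∧ η.2.2 = w}.Finite := by
  have hf' : f ∈ Submodule.span R {f : GTrip G → R |
      ∃ μ ν : FinPath G, μ.src = ν.src ∧ f = Set.indicator (ZZ μ ν) 1} := hf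
  clear hf
  induction hf' using Submodule.span_induction with
  | mem f hfm =>
    obtain ⟨μ, ν, hsrc, rfl⟩ := hfm
    have hmem : ∀ g : GTrip G, Set.indicator (ZZ μ ν) (1 : GTrip G → R) g ≠ 0 → g ∈ ZZ μ ν := by
      intro g hg
      by_cases hgm : g ∈ ZZ μ ν
      · exact hgm
      · rw [Set.indicator_of_notMem hgm] at hg; exact absurd rfl hg
    constructor
    · apply Set.Subsingleton.finite
      rintro g ⟨hg, hg1⟩ g' ⟨hg', hg1'⟩
      exact ZZ_det_left (hmem g hg) (hmem g' hg') (hg1.trans hg1'.symm)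
    · apply Set.Subsingleton.finite
      rintro g ⟨hg, hg1⟩ g' ⟨hg', hg1'⟩
      exact ZZ_det_right (hmem g hg) (hmem g' hg') (hg1.trans hg1'.symm)
  | zero =>
    constructor <;>
      · apply Set.Finite.subset (Set.finite_empty)
        rintro g ⟨hg, _⟩
        exact absurd rfl hg
  | add f1 f2 h1 h2 ih1 ih2 =>
    have key : ∀ g : GTrip G, (f1 + f2) g ≠ 0 → f1 g ≠ 0 ∨ f2 g ≠ 0 := by
      intro g hg
      by_cases hg1 : f1 g = 0
      · refine Or.inr (fun h0 => hg ?_)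
        show f1 g + f2 g = 0
        rw [hg1, h0, add_zero]
      · exact Or.inl hg1
    constructor
    · apply Set.Finite.subset ((ih1.1).union (ih2.1))
      rintro g ⟨hg, hg1⟩
      rcases key g hg with h | h
      · exact Or.inl ⟨h, hg1⟩
      · exact Or.inr ⟨h, hg1⟩
    · apply Set.Finite.subset ((ih1.2).union (ih2.2))
      rintro g ⟨hg, hg1⟩
      rcases key g hg with h | h
      · exact Or.inl ⟨h, hg1⟩
      · exact Or.inr ⟨h, hg1⟩
  | smul c f hfm ih =>
    have key : ∀ g : GTrip G, (c • f) g ≠ 0 → f g ≠ 0 := by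
      intro g hg h0
      apply hg
      show c • f g = 0
      rw [h0, smul_zero]
    constructor
    · exact Set.Finite.subset ih.1 (fun g ⟨hg, hg1⟩ => ⟨key g hg, hg1⟩)
    · exact Set.Finite.subset ih.2 (fun g ⟨hg, hg1⟩ => ⟨key g hg, hg1⟩)

theorem IsConcat.mem_Zset {μ : FinPath G} {z w : InfPath G} (h : IsConcat μ z w) :
    w ∈ Zset μ := by
  obtain ⟨h1, h2⟩ := h
  refine ⟨fun i hi => by rw [h2 i, if_pos hi], ?_⟩
  show w.rng = μ.vtx
  unfold InfPath.rng
  by_cases hl : 0 < μ.len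
  · rw [h2 0, if_pos hl, ← μ.vtx_eq hl]
  · have hl0 : μ.len = 0 := by omega
    rw [h2 0, if_neg (by omega)]
    have hz : z.rng = μ.src := h1
    unfold InfPath.rng at hz
    rw [FinPath.src, if_pos hl0] at hz
    simpa [hl0] using hz

/-- Union of cylinder sets indexed by a list. -/
def cylU : List (FinPath G) → Set (InfPath G)
  | [] => ∅
  | μ :: L => Zset μ ∪ cylU L

theorem cylU_append (L1 L2 : List (FinPath G)) : cylU (L1 ++ L2) = cylU L1 ∪ cylU L2 := by
  induction L1 with
  | nil => simp [cylU]
  | cons μ L ih => simp [cylU, ih, Set.union_assoc]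

/-- Covering lemma: supports of Steinberg algebra elements have ranges and sources
covered by finitely many cylinders. -/
theorem steinberg_cover {f : GTrip G → R} (hf : f ∈ Steinberg R G) :
    ∃ L : List (FinPath G), ∀ g : GTrip G, f g ≠ 0 → g.1 ∈ cylU L ∧ g.2.2 ∈ cylU L := by
  have hf' : f ∈ Submodule.span R {f : GTrip G → R |
      ∃ μ ν : FinPath G, μ.src = ν.src ∧ f = Set.indicator (ZZ μ ν) 1} := hf
  clear hf
  induction hf' using Submodule.span_induction with
  | mem f hfm =>
    obtain ⟨μ, ν, hsrc, rfl⟩ := hfm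
    refine ⟨[μ, ν], fun g hg => ?_⟩
    have hgZ : g ∈ ZZ μ ν := by
      by_cases hgm : g ∈ ZZ μ ν
      · exact hgm
      · rw [Set.indicator_of_notMem hgm] at hg; exact absurd rfl hg
    obtain ⟨z, hzμ, hzν, _⟩ := hgZ
    exact ⟨Or.inl hzμ.mem_Zset, Or.inr (Or.inl hzν.mem_Zset)⟩
  | zero => exact ⟨[], fun g hg => absurd rfl hg⟩
  | add f1 f2 h1 h2 ih1 ih2 =>
    obtain ⟨L1, hL1⟩ := ih1
    obtain ⟨L2, hL2⟩ := ih2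
    refine ⟨L1 ++ L2, fun g hg => ?_⟩
    rw [cylU_append]
    by_cases hg1 : f1 g = 0
    · have hg2 : f2 g ≠ 0 := by
        intro h0
        apply hg
        show f1 g + f2 g = 0
        rw [hg1, h0, add_zero]
      exact ⟨Or.inr (hL2 g hg2).1, Or.inr (hL2 g hg2).2⟩
    · exact ⟨Or.inl (hL1 g hg1).1, Or.inl (hL1 g hg1).2⟩
  | smul c f hfm ih =>
    obtain ⟨L, hL⟩ := ih
    refine ⟨L, fun g hg => hL g (fun h0 => hg ?_)⟩
    show c • f g = 0
    rw [h0, smul_zero]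

open Classical in
/-- Intersection pattern of two cylinders. -/
noncomputable def pick (ν μ : FinPath G) : Option (FinPath G) :=
  if (Zset ν ∩ Zset μ : Set (InfPath G)) = ∅ then none
  else some (if ν.len ≤ μ.len then μ else ν)

theorem Zset_subset_of_mem {μ ν : FinPath G} {w : InfPath G} (hν : w ∈ Zset ν)
    (hμ : w ∈ Zset μ) (hlen : ν.len ≤ μ.len) : Zset μ ⊆ Zset ν := by
  rintro w' ⟨he', hr'⟩
  obtain ⟨heμ, hrμ⟩ := hμ
  obtain ⟨heν, hrν⟩ := hν
  refine ⟨fun i hi => ?_, ?_⟩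
  · rw [he' i (lt_of_lt_of_le hi hlen), ← heμ i (lt_of_lt_of_le hi hlen), heν i hi]
  · show w'.rng = ν.vtx
    rw [hr', ← hrμ, hrν]

theorem pick_spec (ν μ : FinPath G) :
    Zset ν ∩ Zset μ = Option.elim (pick ν μ) ∅ Zset := by
  unfold pick
  split_ifs with h hlen
  · simpa using h
  · obtain ⟨w, hwv, hwm⟩ := Set.nonempty_iff_ne_empty.2 h
    exact Set.inter_eq_right.2 (Zset_subset_of_mem hwv hwm hlen)
  · obtain ⟨w, hwv, hwm⟩ := Set.nonempty_iff_ne_empty.2 h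
    exact Set.inter_eq_left.2 (Zset_subset_of_mem hwm hwv (le_of_not_ge hlen))

theorem inter_cylU (ν : FinPath G) (L : List (FinPath G)) :
    Zset ν ∩ cylU L = cylU (L.filterMap (pick ν)) := by
  induction L with
  | nil => simp [cylU]
  | cons μ L ih =>
    rw [show cylU (μ :: L) = Zset μ ∪ cylU L from rfl, Set.inter_union_distrib_left, ih,
      pick_spec]
    cases hp : pick ν μ with
    | none => simp [List.filterMap_cons, hp]
    | some ρ => simp [List.filterMap_cons, hp, cylU]

theorem unitSet_empty : unitSet (∅ : Set (InfPath G)) = ∅ := by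
  ext g
  simp [unitSet]

theorem unitSet_union (S T : Set (InfPath G)) :
    unitSet (S ∪ T) = unitSet S ∪ unitSet T := by
  ext g
  constructor
  · rintro ⟨z, hz | hz, rfl⟩
    · exact Or.inl ⟨z, hz, rfl⟩
    · exact Or.inr ⟨z, hz, rfl⟩
  · rintro (⟨z, hz, rfl⟩ | ⟨z, hz, rfl⟩)
    · exact ⟨z, Or.inl hz, rfl⟩
    · exact ⟨z, Or.inr hz, rfl⟩

theorem unitSet_inter (S T : Set (InfPath G)) :
    unitSet (S ∩ T) = unitSet S ∩ unitSet T := by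
  ext g
  constructor
  · rintro ⟨z, ⟨hz1, hz2⟩, rfl⟩
    exact ⟨⟨z, hz1, rfl⟩, ⟨z, hz2, rfl⟩⟩
  · rintro ⟨⟨z, hz1, rfl⟩, ⟨z', hz2, hz'⟩⟩
    obtain rfl : z = z' := congrArg Prod.fst hz'
    exact ⟨z, ⟨hz1, hz2⟩, rfl⟩

theorem indicator_union_sub_inter (A B : Set (GTrip G)) :
    Set.indicator (A ∪ B) (1 : GTrip G → R) =
      Set.indicator A 1 + Set.indicator B 1 - Set.indicator (A ∩ B) 1 := by
  funext g
  by_cases hA : g ∈ A <;> by_cases hB : g ∈ B <;>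
    simp [Set.indicator_apply, hA, hB]

theorem cylU_indicator_mem_diag :
    ∀ (k : ℕ) (L : List (FinPath G)), L.length ≤ k →
      Set.indicator (unitSet (cylU L)) (1 : GTrip G → R) ∈ Diag R G := by
  intro k
  induction k with
  | zero =>
    intro L hL
    rw [List.length_eq_zero_iff.1 (Nat.le_zero.1 hL)]
    rw [show cylU ([] : List (FinPath G)) = ∅ from rfl, unitSet_empty, Set.indicator_empty]
    exact Submodule.zero_mem _
  | succ k ih =>
    intro L hL
    cases L with
    | nil =>
      rw [show cylU ([] : List (FinPath G)) = ∅ from rfl, unitSet_empty, Set.indicator_empty]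
      exact Submodule.zero_mem _
    | cons ν L' =>
      have h1 : Set.indicator (unitSet (Zset ν)) (1 : GTrip G → R) ∈ Diag R G :=
        Submodule.subset_span ⟨ν, rfl⟩
      have hlen : L'.length ≤ k := Nat.le_of_succ_le_succ hL
      have h2 := ih L' hlen
      have h3 := ih (L'.filterMap (pick ν))
        (le_trans (List.length_filterMap_le _ _) hlen)
      rw [show cylU (ν :: L') = Zset ν ∪ cylU L' from rfl, unitSet_union,
        indicator_union_sub_inter, ← unitSet_inter, inter_cylU]
      exact Submodule.sub_mem _ (Submodule.add_mem _ h1 h2) h3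

/-- Pointwise associativity of convolution given finiteness of fibers. -/
theorem assoc_pt (f g h : GTrip G → R) (γ : GTrip G)
    (hf : {η : GTrip G | f η ≠ 0 ∧ η.1 = γ.1}.Finite)
    (hg : ∀ w : InfPath G, {η : GTrip G | g η ≠ 0 ∧ η.1 = w}.Finite) :
    conv (conv f g) h γ = conv f (conv g h) γ := by
  classical
  set F : Finset (GTrip G) := hf.toFinset with hF
  set Gf : InfPath G → Finset (GTrip G) := fun w => (hg w).toFinset with hGf
  have memF : ∀ a : GTrip G, a ∈ F ↔ f a ≠ 0 ∧ a.1 = γ.1 := by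
    intro a; simp [hF]
  have memGf : ∀ (w : InfPath G) (a : GTrip G), a ∈ Gf w ↔ g a ≠ 0 ∧ a.1 = w := by
    intro w a; simp [hGf]
  set P : Finset (GTrip G × GTrip G) :=
    F.biUnion (fun ζ => (Gf ζ.2.2).image (fun ξ => (ζ, ξ))) with hP
  have memP : ∀ p : GTrip G × GTrip G, p ∈ P ↔
      (f p.1 ≠ 0 ∧ p.1.1 = γ.1) ∧ (g p.2 ≠ 0 ∧ p.2.1 = p.1.2.2) := by
    intro p
    constructor
    · intro hp
      rw [hP, Finset.mem_biUnion] at hp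
      obtain ⟨ζ, hζ, hp⟩ := hp
      rw [Finset.mem_image] at hp
      obtain ⟨ξ, hξ, hpe⟩ := hp
      subst hpe
      exact ⟨(memF ζ).1 hζ, (memGf ζ.2.2 ξ).1 hξ⟩
    · rintro ⟨h1, h2⟩
      rw [hP, Finset.mem_biUnion]
      exact ⟨p.1, (memF p.1).2 h1, Finset.mem_image.2 ⟨p.2, (memGf p.1.2.2 p.2).2 h2, rfl⟩⟩
  set e : GTrip G × GTrip G → GTrip G := fun p => (γ.1, p.1.2.1 + p.2.2.1, p.2.2.2) with he
  set E : Finset (GTrip G) := P.image e with hE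
  have hE1 : ∀ η ∈ E, η.1 = γ.1 := by
    intro η hη
    rw [hE, Finset.mem_image] at hη
    obtain ⟨p, _, rfl⟩ := hη
    rfl
  set t : GTrip G × GTrip G → R :=
    fun p => f p.1 * (g p.2 * h (p.2.2.2, -p.2.2.1 + (-p.1.2.1 + γ.2.1), γ.2.2)) with ht
  -- RHS computation
  have hRHS : conv f (conv g h) γ = ∑ p ∈ P, t p := by
    show (∑ᶠ η ∈ {η : GTrip G | η.1 = γ.1}, f η * conv g h (gmul (ginv η) γ)) = _
    rw [finsum_mem_eq_sum'' (s := {η : GTrip G | η.1 = γ.1}) _ F (fun a ha => ((memF a).1 ha).2)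
      (fun a ha hne => (memF a).2 ⟨left_ne_zero_of_mul hne, ha⟩)]
    have hinner : ∀ η ∈ F, f η * conv g h (gmul (ginv η) γ) =
        ∑ ζ ∈ Gf η.2.2, f η * (g ζ * h (ζ.2.2, -ζ.2.1 + (-η.2.1 + γ.2.1), γ.2.2)) := by
      intro η _
      have : conv g h (gmul (ginv η) γ) =
          ∑ ζ ∈ Gf η.2.2, g ζ * h (ζ.2.2, -ζ.2.1 + (-η.2.1 + γ.2.1), γ.2.2) := by
        show (∑ᶠ ζ ∈ {ζ : GTrip G | ζ.1 = η.2.2},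
            g ζ * h (gmul (ginv ζ) (gmul (ginv η) γ))) = _
        exact finsum_mem_eq_sum'' (s := {ζ : GTrip G | ζ.1 = η.2.2}) _ (Gf η.2.2)
          (fun a ha => ((memGf η.2.2 a).1 ha).2)
          (fun a ha hne => (memGf η.2.2 a).2 ⟨left_ne_zero_of_mul hne, ha⟩)
      rw [this, Finset.mul_sum]
    rw [Finset.sum_congr rfl hinner, hP, Finset.sum_biUnion, ht]
    · apply Finset.sum_congr rfl
      intro ζ _
      rw [Finset.sum_image (by intro a _ b _ hab; exact (Prod.mk.injEq _ _ _ _ ▸ hab).2)]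
    · intro ζ1 _ ζ2 _ hne
      simp only [Finset.disjoint_left, Finset.mem_image]
      rintro a ⟨ξ1, _, rfl⟩ ⟨ξ2, _, hc⟩
      exact hne (congrArg Prod.fst hc).symm
  -- LHS computation
  have hLHS : conv (conv f g) h γ = ∑ q ∈ E ×ˢ F,
      f q.2 * g (gmul (ginv q.2) q.1) * h (gmul (ginv q.1) γ) := by
    show (∑ᶠ η ∈ {η : GTrip G | η.1 = γ.1}, conv f g η * h (gmul (ginv η) γ)) = _
    rw [finsum_mem_eq_sum'' (s := {η : GTrip G | η.1 = γ.1}) _ E (fun a ha => hE1 a ha) ?_]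
    · have hinner : ∀ η ∈ E, conv f g η * h (gmul (ginv η) γ) =
          ∑ ζ ∈ F, f ζ * g (gmul (ginv ζ) η) * h (gmul (ginv η) γ) := by
        intro η hη
        have : conv f g η = ∑ ζ ∈ F, f ζ * g (gmul (ginv ζ) η) := by
          show (∑ᶠ ζ ∈ {ζ : GTrip G | ζ.1 = η.1}, f ζ * g (gmul (ginv ζ) η)) = _
          exact finsum_mem_eq_sum'' (s := {ζ : GTrip G | ζ.1 = η.1}) _ F
            (fun a ha => ((memF a).1 ha).2.trans (hE1 η hη).symm)
            (fun a ha hne => (memF a).2 ⟨left_ne_zero_of_mul hne, ha.trans (hE1 η hη)⟩)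
        rw [this, Finset.sum_mul]
      rw [Finset.sum_congr rfl hinner]
      exact (Finset.sum_product (s := E) (t := F)
        (f := fun q => f q.2 * g (gmul (ginv q.2) q.1) * h (gmul (ginv q.1) γ))).symm
    · intro η hη hne
      have hcfg : conv f g η ≠ 0 := left_ne_zero_of_mul hne
      have hex : ∃ ζ : GTrip G, ζ.1 = η.1 ∧ f ζ * g (gmul (ginv ζ) η) ≠ 0 := by
        by_contra hc
        push_neg at hc
        apply hcfg
        show (∑ᶠ ζ ∈ {ζ : GTrip G | ζ.1 = η.1}, f ζ * g (gmul (ginv ζ) η)) = 0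
        exact finsum_mem_zero'' _ (fun b hb => hc b hb)
      obtain ⟨ζ, hζ1, hζne⟩ := hex
      have hfζ : f ζ ≠ 0 := left_ne_zero_of_mul hζne
      have hgξ : g (gmul (ginv ζ) η) ≠ 0 := right_ne_zero_of_mul hζne
      have hη1 : η.1 = γ.1 := hη
      have hpP : (ζ, gmul (ginv ζ) η) ∈ P :=
        (memP _).2 ⟨⟨hfζ, hζ1.trans hη1⟩, ⟨hgξ, rfl⟩⟩
      rw [hE, Finset.mem_image]
      refine ⟨(ζ, gmul (ginv ζ) η), hpP, ?_⟩
      show (γ.1, ζ.2.1 + (-ζ.2.1 + η.2.1), η.2.2) = η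
      refine Prod.ext hη1.symm (Prod.ext ?_ rfl)
      show ζ.2.1 + (-ζ.2.1 + η.2.1) = η.2.1
      omega
  rw [hLHS, hRHS]
  -- transfer via the embedding e' p = (e p, p.1)
  set e' : GTrip G × GTrip G → GTrip G × GTrip G := fun p => (e p, p.1) with he'
  have hinjP : ∀ p1 ∈ P, ∀ p2 ∈ P, e' p1 = e' p2 → p1 = p2 := by
    intro p1 hp1 p2 hp2 hee
    have h1 : p1.1 = p2.1 := congrArg Prod.snd hee
    have h2 : e p1 = e p2 := congrArg Prod.fst hee
    have hm1 : p1.1.2.1 + p1.2.2.1 = p2.1.2.1 + p2.2.2.1 := congrArg (fun q => q.2.1) h2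
    have hm2 : p1.2.2.2 = p2.2.2.2 := congrArg (fun q => q.2.2) h2
    have hs1 : p1.2.1 = p1.1.2.2 := ((memP p1).1 hp1).2.2
    have hs2 : p2.2.1 = p2.1.2.2 := ((memP p2).1 hp2).2.2
    have hm0 : p1.1.2.1 = p2.1.2.1 := congrArg (fun q => q.2.1) h1
    refine Prod.ext h1 (Prod.ext (by rw [hs1, hs2, h1]) (Prod.ext (by omega) hm2))
  have hsub : P.image e' ⊆ E ×ˢ F := by
    intro q hq
    rw [Finset.mem_image] at hq
    obtain ⟨p, hp, rfl⟩ := hq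
    rw [Finset.mem_product]
    exact ⟨Finset.mem_image.2 ⟨p, hp, rfl⟩, (memF p.1).2 ((memP p).1 hp).1⟩
  have hvanish : ∀ q ∈ E ×ˢ F, q ∉ P.image e' →
      f q.2 * g (gmul (ginv q.2) q.1) * h (gmul (ginv q.1) γ) = 0 := by
    intro q hq hqn
    by_contra hTne
    rw [Finset.mem_product] at hq
    have hfq : f q.2 ≠ 0 := left_ne_zero_of_mul (left_ne_zero_of_mul hTne)
    have hgq : g (gmul (ginv q.2) q.1) ≠ 0 := right_ne_zero_of_mul (left_ne_zero_of_mul hTne)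
    have hq2F : q.2.1 = γ.1 := ((memF q.2).1 hq.2).2
    have hpP : (q.2, gmul (ginv q.2) q.1) ∈ P := (memP _).2 ⟨⟨hfq, hq2F⟩, ⟨hgq, rfl⟩⟩
    apply hqn
    rw [Finset.mem_image]
    refine ⟨(q.2, gmul (ginv q.2) q.1), hpP, ?_⟩
    have hq1 : q.1.1 = γ.1 := hE1 q.1 hq.1
    refine Prod.ext ?_ rfl
    show (γ.1, q.2.2.1 + (-q.2.2.1 + q.1.2.1), q.1.2.2) = q.1
    refine Prod.ext hq1.symm (Prod.ext ?_ rfl)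
    show q.2.2.1 + (-q.2.2.1 + q.1.2.1) = q.1.2.1
    omega
  rw [← Finset.sum_subset hsub hvanish, Finset.sum_image hinjP]
  apply Finset.sum_congr rfl
  intro p hp
  have hs : p.2.1 = p.1.2.2 := ((memP p).1 hp).2.2
  have harg1 : gmul (ginv p.1) (e p) = p.2 := by
    show (p.1.2.2, -p.1.2.1 + (p.1.2.1 + p.2.2.1), p.2.2.2) = p.2
    refine Prod.ext hs.symm (Prod.ext ?_ rfl)
    show -p.1.2.1 + (p.1.2.1 + p.2.2.1) = p.2.2.1
    omega
  have harg2 : gmul (ginv (e p)) γ =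
      ((p.2.2.2 : InfPath G), -p.2.2.1 + (-p.1.2.1 + γ.2.1), γ.2.2) := by
    show ((p.2.2.2 : InfPath G), -(p.1.2.1 + p.2.2.1) + γ.2.1, γ.2.2) = _
    refine Prod.ext rfl (Prod.ext ?_ rfl)
    show -(p.1.2.1 + p.2.2.1) + γ.2.1 = -p.2.2.1 + (-p.1.2.1 + γ.2.1)
    omega
  show f (e' p).2 * g (gmul (ginv (e' p).2) (e' p).1) * h (gmul (ginv (e' p).1) γ) = t p
  have h21 : (e' p).2 = p.1 := rfl
  have h11 : (e' p).1 = e p := rfl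
  rw [h21, h11, harg1, harg2, ht, mul_assoc]

end Aux

end LPA

open LPA in
/-- If `x ∈ dom(n)` then `α_n(x) ∈ ran(n)`. -/
theorem alpha_mem_ran {G : DirGraph} (hrf : RowFinite G) (hns : NoSources G)
    {R : Type} [CommRing R] [IsDomain R] [StarRing R]
    (n : GTrip G → R) (hn : IsNormalizer n) (x : InfPath G) (hx : x ∈ domSet n) :
    alphaFun n x ∈ ranSet n := by
  obtain ⟨hnSt, hnNorm⟩ := hn
  have hxne : conv (starf n) n (unit x) ≠ 0 := hx
  -- existence of an element of the support with source `x`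
  have hex : ∃ g : GTrip G, n g ≠ 0 ∧ g.2.2 = x := by
    by_contra hc
    push_neg at hc
    apply hxne
    show (∑ᶠ η ∈ {η : GTrip G | η.1 = (unit x).1},
        starf n η * n (gmul (ginv η) (unit x))) = 0
    apply finsum_mem_zero''
    intro b _
    rcases eq_or_ne (n (gmul (ginv b) (unit x))) 0 with h0 | h0
    · rw [h0, mul_zero]
    · exact absurd rfl (hc _ h0)
  have hg0 := hex.choose_spec
  set g0 : GTrip G := hex.choose with hg0def
  have hy : alphaFun n x = g0.1 := by
    unfold alphaFun
    rw [dif_pos hex]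
  -- a diagonal local unit for `n`
  obtain ⟨L, hL⟩ := steinberg_cover hnSt
  set U : Set (InfPath G) := cylU L with hU
  set d : GTrip G → R := Set.indicator (unitSet U) 1 with hd
  have hdDiag : d ∈ Diag R G := cylU_indicator_mem_diag L.length L le_rfl
  have hnd : conv n d = n := conv_indicator_unit (fun g hg => (hL g hg).2)
  have hsd : conv (starf n) d = starf n := by
    apply conv_indicator_unit
    intro g hg
    have hni : n (ginv g) ≠ 0 := by
      intro h0
      apply hg
      show star (n (ginv g)) = 0
      rw [h0, star_zero]
    exact (hL (ginv g) hni).1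
  have hB : conv n (starf n) ∈ Diag R G := by
    have := (hnNorm d hdDiag).1
    rwa [hnd] at this
  have hA : conv (starf n) n ∈ Diag R G := by
    have := (hnNorm d hdDiag).2
    rwa [hsd] at this
  -- finiteness of fibers
  have hfib := fun w => steinberg_fibers hnSt w
  have hfibs : ∀ w : InfPath G, {η : GTrip G | starf n η ≠ 0 ∧ η.1 = w}.Finite := by
    intro w
    have hset : {η : GTrip G | starf n η ≠ 0 ∧ η.1 = w} =
        ginv '' {η : GTrip G | n η ≠ 0 ∧ η.2.2 = w} := by
      ext η
      simp only [Set.mem_setOf_eq, Set.mem_image]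
      constructor
      · rintro ⟨h1, h2⟩
        refine ⟨ginv η, ⟨?_, h2⟩, ginv_ginv η⟩
        intro h0
        apply h1
        show star (n (ginv η)) = 0
        rw [h0, star_zero]
      · rintro ⟨b, ⟨h1, h2⟩, rfl⟩
        refine ⟨?_, h2⟩
        show star (n (ginv (ginv b))) ≠ 0
        rw [ginv_ginv]
        exact fun h0 => h1 (star_eq_zero.1 h0)
    rw [hset]
    exact ((hfib w).2).image _
  -- associativity at `g0`
  have hassoc := assoc_pt n (starf n) n g0 (hfib g0.1).1 hfibs
  -- collapse both sides
  have hcoll1 : conv n (conv (starf n) n) g0 = n g0 * conv (starf n) n (unit x) := by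
    rw [conv_diag_right (diag_vanish hA) g0, hg0.2]
  have hcoll2 : conv (conv n (starf n)) n g0 = conv n (starf n) (unit g0.1) * n g0 :=
    conv_diag_left (diag_vanish hB) g0
  -- conclude
  rw [hy]
  show conv n (starf n) (unit g0.1) ≠ 0
  intro h0
  have hzero : n g0 * conv (starf n) n (unit x) = 0 := by
    rw [← hcoll1, ← hassoc, hcoll2, h0, zero_mul]
  exact mul_ne_zero hg0.1 hxne hzero
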